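/- Corollary (convergence to optimal input sets): Let 𝒮* be the collection of feasible sets of minimum cardinality. Then for every initial state S₀ ∈ 𝒱, lim_{T→0⁺} lim_{t→∞} Σ_{S ∈ 𝒮*} (P_T^t)(S₀, S) = 1; that is, for large time and small temperature the MCMC chain is, with probability approaching 1, at a minimum-cardinality feasible set. -/

import Mathlib

open Finset
open scoped Classical

/-- One-step forcing operator of the zero forcing process in a loop directed
graph with edge relation `E` (`E u v` means there is an edge from `u` to `v`,
i.e. `v` is an out-neighbor of `u`): to the black set `B` we add every white
vertex `v` that is the unique out-neighbor, not in `B`, of some vertex `u`. -/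
noncomputable def forceStep {V : Type*} [Fintype V] (E : V → V → Prop)
    (B : Finset V) : Finset V :=
  B ∪ univ.filter fun v => v ∉ B ∧ ∃ u, E u v ∧ ∀ w, E u w → w ∉ B → w = v

/-- The zero forcing closure of `S`: iterate the one-step forcing operator
`|V|` times. -/
noncomputable def zfClosure {V : Type*} [Fintype V] (E : V → V → Prop)
    (S : Finset V) : Finset V :=
  (forceStep E)^[Fintype.card V] S

/-- One-step forcing operator of the restricted zero forcing process:
a force `u → v` with `u = v` is forbidden whenever `forbid v` holds. -/
noncomputable def forceStepR {V : Type*} [Fintype V] (E : V → V → Prop)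
    (forbid : V → Prop) (B : Finset V) : Finset V :=
  B ∪ univ.filter fun v => v ∉ B ∧
    ∃ u, E u v ∧ (∀ w, E u w → w ∉ B → w = v) ∧ ¬(u = v ∧ forbid v)

/-- The restricted zero forcing closure. -/
noncomputable def zfClosureR {V : Type*} [Fintype V] (E : V → V → Prop)
    (forbid : V → Prop) (S : Finset V) : Finset V :=
  (forceStepR E forbid)^[Fintype.card V] S

/- For a pattern matrix `A ∈ {0,×}^{n×n}`, modelled as `A : Fin n → Fin n → Prop`
with `A i j` meaning `A_{ij} = ×`, the graph `G(A)` has an edge `(x_j, x_i)` iff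
`A i j = ×`, i.e. its edge relation is `fun u v => A v u`.  The modified pattern
`A_×` replaces every zero diagonal entry of `A` by `×`, so the edge relation of
`G(A_×)` is `fun u v => A v u ∨ u = v`, and in `G(A_×)` self-forces `x → x` are
forbidden at every vertex `x` with `A x x = ×`. -/

/-- The stalled white set `W(S)` of the zero forcing process in `G(A)`. -/
noncomputable def WA {n : ℕ} (A : Fin n → Fin n → Prop) (S : Finset (Fin n)) :
    Finset (Fin n) :=
  (zfClosure (fun u v => A v u) S)ᶜ

/-- The stalled white set `W_×(S)` of the restricted zero forcing process in
`G(A_×)`. -/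
noncomputable def Wx {n : ℕ} (A : Fin n → Fin n → Prop) (S : Finset (Fin n)) :
    Finset (Fin n) :=
  (zfClosureR (fun u v => A v u ∨ u = v) (fun v => A v v) S)ᶜ

/-- `S` is feasible if the zero forcing process from `S` in `G(A)` and the
restricted zero forcing process from `S` in `G(A_×)` both colour every vertex
black. -/
def Feasible {n : ℕ} (A : Fin n → Fin n → Prop) (S : Finset (Fin n)) : Prop :=
  WA A S = ∅ ∧ Wx A S = ∅

/-- The cost function `C(S) = |S| + (1+ε)·|W(S) ∪ W_×(S)|`. -/
noncomputable def zcost {n : ℕ} (A : Fin n → Fin n → Prop) (ε : ℝ)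
    (S : Finset (Fin n)) : ℝ :=
  (S.card : ℝ) + (1 + ε) * ((WA A S ∪ Wx A S).card : ℝ)

variable {V : Type*} [Fintype V] [DecidableEq V]

/-- The collection of sets obtained from `S` by adding one new vertex. -/
def N1 (S : Finset V) : Finset (Finset V) := Sᶜ.image fun x => insert x S

/-- The collection of sets obtained from `S` by removing one vertex. -/
def N2 (S : Finset V) : Finset (Finset V) := S.image fun x => S.erase x

/-- The collection of sets obtained from `S` by swapping one vertex of `S`
with one vertex outside `S`. -/
def N3 (S : Finset V) : Finset (Finset V) :=
  (Sᶜ ×ˢ S).image fun p => (insert p.1 S).erase p.2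

/-- Off-diagonal transition probabilities of the Metropolis chain. -/
noncomputable def Poff (C : Finset V → ℝ) (T : ℝ) (S S' : Finset V) : ℝ :=
  if S' ∈ N1 S ∪ N2 S then
    (2 / (3 * (Fintype.card V : ℝ))) * min (Real.exp ((C S - C S') / T)) 1
  else if S' ∈ N3 S then
    (1 / (3 * (S.card : ℝ) * ((Fintype.card V : ℝ) - (S.card : ℝ)))) *
      min (Real.exp ((C S - C S') / T)) 1
  else 0

/-- The transition matrix `P_T` of the Metropolis chain: off the diagonal it is
given by `Poff`, and the diagonal entry is `1` minus the sum of the off-diagonal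
entries in the row. -/
noncomputable def Ptrans (C : Finset V → ℝ) (T : ℝ) (S S' : Finset V) : ℝ :=
  if S' = S then 1 - ∑ S'' ∈ univ.erase S, Poff C T S S''
  else Poff C T S S'

/-- The Gibbs distribution at temperature `T` for the cost function `C`. -/
noncomputable def gibbs (C : Finset V → ℝ) (T : ℝ) (S : Finset V) : ℝ :=
  Real.exp (-C S / T) / ∑ S₁ : Finset V, Real.exp (-C S₁ / T)


section MyAux
open Filter Matrix


section Chain
variable {X : Type*} [Fintype X] [DecidableEq X] [Nonempty X]

/-- nonneg entries preserved under powers. -/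
lemma pow_nonneg_entries (P : Matrix X X ℝ) (h : ∀ x y, 0 ≤ P x y) :
    ∀ t, ∀ x y, 0 ≤ (P ^ t) x y := by
  intro t
  induction t with
  | zero => intro x y; simp [Matrix.one_apply]; split <;> norm_num
  | succ t ih =>
      intro x y
      rw [pow_succ, Matrix.mul_apply]
      exact Finset.sum_nonneg fun z _ => mul_nonneg (ih x z) (h z y)

lemma pow_row_sum (P : Matrix X X ℝ) (h : ∀ x, ∑ y, P x y = 1) :
    ∀ t, ∀ x, ∑ y, (P ^ t) x y = 1 := by
  intro t
  induction t with
  | zero => intro x; simp [Matrix.one_apply]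
  | succ t ih =>
      intro x
      simp only [pow_succ, Matrix.mul_apply]
      rw [Finset.sum_comm]
      calc ∑ z : X, ∑ y : X, (P ^ t) x z * P z y
          = ∑ z : X, (P ^ t) x z * ∑ y : X, P z y := by
            simp [Finset.mul_sum]
        _ = 1 := by simp only [h]; simpa using ih x

lemma pow_entry_le_of_step (P : Matrix X X ℝ) (h : ∀ x y, 0 ≤ P x y)
    {s t : ℕ} {a b c : X} : (P ^ s) a b * (P ^ t) b c ≤ (P ^ (s + t)) a c := by
  rw [pow_add, Matrix.mul_apply]
  refine Finset.single_le_sum (fun z _ => mul_nonneg (pow_nonneg_entries P h s a z) (pow_nonneg_entries P h t z c)) (mem_univ b)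

end Chain

section Conv
set_option linter.unusedSectionVars false
variable {X : Type*} [Fintype X] [DecidableEq X] [Nonempty X]
variable (P : Matrix X X ℝ)

private noncomputable def gfun (f : X → ℝ) (t : ℕ) : X → ℝ := (P ^ t) *ᵥ f
private noncomputable def Mf (f : X → ℝ) (t : ℕ) : ℝ := univ.sup' univ_nonempty (gfun P f t)
private noncomputable def mf (f : X → ℝ) (t : ℕ) : ℝ := univ.inf' univ_nonempty (gfun P f t)

lemma gfun_succ (f : X → ℝ) (t : ℕ) : gfun P f (t + 1) = P *ᵥ (gfun P f t) := by
  unfold gfun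
  rw [Matrix.mulVec_mulVec, ← pow_succ']

lemma mulVec_le_sup (hnn : ∀ x y, 0 ≤ P x y) (hrow : ∀ x, ∑ y, P x y = 1)
    (g : X → ℝ) (x : X) {M : ℝ} (hM : ∀ y, g y ≤ M) : (P *ᵥ g) x ≤ M := by
  have : (P *ᵥ g) x = ∑ y, P x y * g y := rfl
  rw [this]
  calc ∑ y, P x y * g y ≤ ∑ y, P x y * M :=
        Finset.sum_le_sum fun y _ => mul_le_mul_of_nonneg_left (hM y) (hnn x y)
    _ = M := by rw [← Finset.sum_mul, hrow]; ring

lemma inf_le_mulVec (hnn : ∀ x y, 0 ≤ P x y) (hrow : ∀ x, ∑ y, P x y = 1)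
    (g : X → ℝ) (x : X) {m : ℝ} (hm : ∀ y, m ≤ g y) : m ≤ (P *ᵥ g) x := by
  have : (P *ᵥ g) x = ∑ y, P x y * g y := rfl
  rw [this]
  calc m = ∑ y, P x y * m := by rw [← Finset.sum_mul, hrow]; ring
    _ ≤ ∑ y, P x y * g y :=
        Finset.sum_le_sum fun y _ => mul_le_mul_of_nonneg_left (hm y) (hnn x y)

lemma Mf_antitone (hnn : ∀ x y, 0 ≤ P x y) (hrow : ∀ x, ∑ y, P x y = 1) (f : X → ℝ) :
    Antitone (Mf P f) := by
  refine antitone_nat_of_succ_le fun t => ?_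
  rw [Mf, Finset.sup'_le_iff]
  intro x _
  rw [gfun_succ]
  exact mulVec_le_sup P hnn hrow _ x fun y => Finset.le_sup' _ (mem_univ y)

lemma mf_monotone (hnn : ∀ x y, 0 ≤ P x y) (hrow : ∀ x, ∑ y, P x y = 1) (f : X → ℝ) :
    Monotone (mf P f) := by
  refine monotone_nat_of_le_succ fun t => ?_
  nth_rewrite 2 [mf]
  rw [Finset.le_inf'_iff]
  intro x _
  rw [gfun_succ]
  exact inf_le_mulVec P hnn hrow _ x fun y => Finset.inf'_le _ (mem_univ y)

lemma mf_le_gfun (f : X → ℝ) (t : ℕ) (x : X) : mf P f t ≤ gfun P f t x :=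
  Finset.inf'_le _ (mem_univ x)

lemma gfun_le_Mf (f : X → ℝ) (t : ℕ) (x : X) : gfun P f t x ≤ Mf P f t :=
  Finset.le_sup' _ (mem_univ x)

/-- contraction step -/
lemma osc_contract (Q : Matrix X X ℝ) (hrowQ : ∀ x, ∑ y, Q x y = 1)
    {δ : ℝ} (hQδ : ∀ x y, δ ≤ Q x y) (g : X → ℝ) {m M : ℝ}
    (hm : ∀ y, m ≤ g y) (hM : ∀ y, g y ≤ M) (x y : X) :
    (Q *ᵥ g) x - (Q *ᵥ g) y ≤ (1 - (Fintype.card X : ℝ) * δ) * (M - m) := by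
  have hNd : (Fintype.card X : ℝ) * δ ≤ 1 := by
    inhabit X
    have h1 : ∑ z : X, δ ≤ ∑ z : X, Q default z := Finset.sum_le_sum fun z _ => hQδ _ z
    rw [Finset.sum_const, hrowQ] at h1
    simpa [nsmul_eq_mul] using h1
  have hmM : m ≤ M := le_trans (hm (Classical.arbitrary X)) (hM (Classical.arbitrary X))
  have e1 : (Q *ᵥ g) x = ∑ z, (Q x z - δ) * g z + δ * ∑ z, g z := by
    simp [Matrix.mulVec, dotProduct, sub_mul, Finset.sum_sub_distrib, Finset.mul_sum]
  have e2 : (Q *ᵥ g) y = ∑ z, (Q y z - δ) * g z + δ * ∑ z, g z := by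
    simp [Matrix.mulVec, dotProduct, sub_mul, Finset.sum_sub_distrib, Finset.mul_sum]
  have hx : ∑ z, (Q x z - δ) * g z ≤ (1 - (Fintype.card X : ℝ) * δ) * M := by
    calc ∑ z, (Q x z - δ) * g z ≤ ∑ z, (Q x z - δ) * M :=
          Finset.sum_le_sum fun z _ => mul_le_mul_of_nonneg_left (hM z) (by linarith [hQδ x z])
      _ = (1 - (Fintype.card X : ℝ) * δ) * M := by
          rw [← Finset.sum_mul, Finset.sum_sub_distrib, hrowQ, Finset.sum_const]
          simp [nsmul_eq_mul]
  have hy : (1 - (Fintype.card X : ℝ) * δ) * m ≤ ∑ z, (Q y z - δ) * g z := by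
    calc (1 - (Fintype.card X : ℝ) * δ) * m
        = ∑ z, (Q y z - δ) * m := by
          rw [← Finset.sum_mul, Finset.sum_sub_distrib, hrowQ, Finset.sum_const]
          simp [nsmul_eq_mul]
      _ ≤ ∑ z, (Q y z - δ) * g z :=
          Finset.sum_le_sum fun z _ => mul_le_mul_of_nonneg_left (hm z) (by linarith [hQδ y z])
  rw [e1, e2]
  have := mul_le_mul_of_nonneg_left hmM (by linarith : (0:ℝ) ≤ 1 - (Fintype.card X : ℝ) * δ)
  linarith [hx, hy]
end Conv

section Main
set_option linter.unusedSectionVars false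
variable {X : Type*} [Fintype X] [DecidableEq X] [Nonempty X]

theorem chain_tendsto (P : Matrix X X ℝ)
    (hnn : ∀ x y, 0 ≤ P x y) (hrow : ∀ x, ∑ y, P x y = 1)
    (s : ℕ) (hs : 0 < s) (δ : ℝ) (hδ : 0 < δ) (hQ : ∀ x y, δ ≤ (P ^ s) x y)
    (π : X → ℝ) (hπ1 : ∑ x, π x = 1) (hπP : ∀ y, ∑ x, π x * P x y = π y)
    (f : X → ℝ) (x₀ : X) :
    Tendsto (fun t => ((P ^ t) *ᵥ f) x₀) atTop (nhds (∑ x, π x * f x)) := by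
  set N : ℝ := (Fintype.card X : ℝ) with hN
  set r : ℝ := 1 - N * δ with hr
  have hrowQ : ∀ x, ∑ y, (P ^ s) x y = 1 := pow_row_sum P hrow s
  have hr0 : 0 ≤ r := by
    inhabit X
    have h1 : ∑ z : X, δ ≤ ∑ z : X, (P ^ s) default z :=
      Finset.sum_le_sum fun z _ => hQ _ z
    rw [Finset.sum_const, hrowQ] at h1
    simp only [nsmul_eq_mul, Finset.card_univ] at h1
    simp only [hr, hN]; linarith
  have hr1 : r < 1 := by
    have hN1 : (1 : ℝ) ≤ N := by
      simp only [hN, Nat.one_le_cast]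
      exact Fintype.card_pos
    have : 0 < N * δ := mul_pos (by linarith) hδ
    simp only [hr]; linarith
  set D : ℕ → ℝ := fun t => Mf P f t - mf P f t with hD
  have hmle : ∀ t x, mf P f t ≤ Mf P f t := fun t x =>
    le_trans (mf_le_gfun P f t x) (gfun_le_Mf P f t x)
  have hD0 : ∀ t, 0 ≤ D t := by
    intro t; inhabit X
    simp only [hD, sub_nonneg]; exact hmle t default
  have hDanti : Antitone D := fun a b hab =>
    sub_le_sub (Mf_antitone P hnn hrow f hab) (mf_monotone P hnn hrow f hab)
  have hstep : ∀ t, D (t + s) ≤ r * D t := by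
    intro t
    have hg : gfun P f (t + s) = (P ^ s) *ᵥ (gfun P f t) := by
      unfold gfun
      rw [Matrix.mulVec_mulVec, ← pow_add, add_comm]
    obtain ⟨x, -, hx⟩ := Finset.exists_mem_eq_sup' (univ_nonempty (α := X)) (gfun P f (t + s))
    obtain ⟨y, -, hy⟩ := Finset.exists_mem_eq_inf' (univ_nonempty (α := X)) (gfun P f (t + s))
    have : gfun P f (t + s) x - gfun P f (t + s) y ≤ r * (Mf P f t - mf P f t) := by
      rw [hg]
      exact osc_contract (P ^ s) hrowQ hQ (gfun P f t)
        (fun z => mf_le_gfun P f t z) (fun z => gfun_le_Mf P f t z) x y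
    calc D (t + s) = gfun P f (t + s) x - gfun P f (t + s) y := by
          simp only [hD, Mf, mf, hx, hy]
      _ ≤ r * D t := this
  have hgeo : ∀ k, D (s * k) ≤ r ^ k * D 0 := by
    intro k
    induction k with
    | zero => simp
    | succ k ih =>
        have : D (s * (k + 1)) = D (s * k + s) := by ring_nf
        rw [this]
        calc D (s * k + s) ≤ r * D (s * k) := hstep _
          _ ≤ r * (r ^ k * D 0) := mul_le_mul_of_nonneg_left ih hr0
          _ = r ^ (k + 1) * D 0 := by ring
  have hDlim : Tendsto D atTop (nhds 0) := by
    have hup : ∀ t, D t ≤ r ^ (t / s) * D 0 := by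
      intro t
      calc D t ≤ D (s * (t / s)) := hDanti (by rw [mul_comm]; exact Nat.div_mul_le_self t s)
        _ ≤ r ^ (t / s) * D 0 := hgeo _
    have h2 : Tendsto (fun t : ℕ => r ^ (t / s) * D 0) atTop (nhds 0) := by
      have hdiv : Tendsto (fun t : ℕ => t / s) atTop atTop :=
        le_of_eq (Filter.map_div_atTop_eq_nat s hs)
      have := ((tendsto_pow_atTop_nhds_zero_of_lt_one hr0 hr1).comp hdiv).mul_const (D 0)
      simpa using this
    exact squeeze_zero hD0 hup h2
  set L : ℝ := ⨆ t, mf P f t with hL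
  have hbdd : BddAbove (Set.range (mf P f)) := by
    refine ⟨Mf P f 0, ?_⟩
    rintro _ ⟨t, rfl⟩
    inhabit X
    exact le_trans (hmle t default) (Mf_antitone P hnn hrow f (Nat.zero_le t))
  have hmf_lim : Tendsto (mf P f) atTop (nhds L) :=
    tendsto_atTop_ciSup (mf_monotone P hnn hrow f) hbdd
  have hupper : Tendsto (fun t => mf P f t + D t) atTop (nhds L) := by
    have := hmf_lim.add hDlim
    simpa using this
  have hlim : ∀ x, Tendsto (fun t => gfun P f t x) atTop (nhds L) := by
    intro x
    refine tendsto_of_tendsto_of_tendsto_of_le_of_le hmf_lim hupper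
      (fun t => mf_le_gfun P f t x) (fun t => ?_)
    have h1 := gfun_le_Mf P f t x
    simp only [hD]; linarith
  have hconst : ∀ t, ∑ x, π x * gfun P f t x = ∑ x, π x * f x := by
    intro t
    induction t with
    | zero => simp [gfun]
    | succ t ih =>
        rw [← ih]
        rw [gfun_succ]
        calc ∑ x, π x * (P *ᵥ gfun P f t) x
            = ∑ x, ∑ y, π x * P x y * gfun P f t y := by
              simp [Matrix.mulVec, dotProduct, Finset.mul_sum, mul_assoc]
          _ = ∑ y, (∑ x, π x * P x y) * gfun P f t y := by
              rw [Finset.sum_comm]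
              simp [Finset.sum_mul]
          _ = ∑ x, π x * gfun P f t x := by
              simp only [hπP]
  have hsum_lim : Tendsto (fun t => ∑ x, π x * gfun P f t x) atTop (nhds (∑ x, π x * L)) :=
    tendsto_finset_sum _ (fun x _ => (hlim x).const_mul (π x))
  have hLsum : ∑ x, π x * L = L := by
    rw [← Finset.sum_mul, hπ1, one_mul]
  have hconst_lim : Tendsto (fun t => ∑ x, π x * gfun P f t x) atTop (nhds (∑ x, π x * f x)) := by
    have : (fun t => ∑ x, π x * gfun P f t x) = fun _ => ∑ x, π x * f x := funext hconst
    rw [this]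
    exact tendsto_const_nhds
  have hLeq : L = ∑ x, π x * f x := by
    rw [← hLsum]
    exact tendsto_nhds_unique hsum_lim hconst_lim
  have := hlim x₀
  rw [hLeq] at this
  exact this
end Main

-- new lemmas
section ZF
variable {V : Type*} [Fintype V] (E : V → V → Prop) (forbid : V → Prop)

lemma subset_forceStep (B : Finset V) : B ⊆ forceStep E B := subset_union_left

lemma subset_forceStepR (B : Finset V) : B ⊆ forceStepR E forbid B := subset_union_left

lemma forceStep_mono {B B' : Finset V} (h : B ⊆ B') : forceStep E B ⊆ forceStep E B' := by
  intro v hv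
  rw [forceStep, mem_union] at hv ⊢
  rcases hv with hv | hv
  · exact Or.inl (h hv)
  · simp only [mem_filter, mem_univ, true_and] at hv
    obtain ⟨hvB, u, huv, hu⟩ := hv
    by_cases hvB' : v ∈ B'
    · exact Or.inl hvB'
    · refine Or.inr ?_
      simp only [mem_filter, mem_univ, true_and]
      exact ⟨hvB', u, huv, fun w hw hw' => hu w hw fun hwB => hw' (h hwB)⟩

lemma forceStepR_mono {B B' : Finset V} (h : B ⊆ B') :
    forceStepR E forbid B ⊆ forceStepR E forbid B' := by
  intro v hv
  rw [forceStepR, mem_union] at hv ⊢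
  rcases hv with hv | hv
  · exact Or.inl (h hv)
  · simp only [mem_filter, mem_univ, true_and] at hv
    obtain ⟨hvB, u, huv, hu, hforb⟩ := hv
    by_cases hvB' : v ∈ B'
    · exact Or.inl hvB'
    · refine Or.inr ?_
      simp only [mem_filter, mem_univ, true_and]
      exact ⟨hvB', u, huv, fun w hw hw' => hu w hw fun hwB => hw' (h hwB), hforb⟩

lemma subset_zfClosure (S : Finset V) : S ⊆ zfClosure E S := by
  rw [zfClosure]
  generalize Fintype.card V = k
  induction k with
  | zero => simp
  | succ k ih =>
      rw [Function.iterate_succ_apply']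
      exact ih.trans (subset_forceStep E _)

lemma subset_zfClosureR (S : Finset V) : S ⊆ zfClosureR E forbid S := by
  rw [zfClosureR]
  generalize Fintype.card V = k
  induction k with
  | zero => simp
  | succ k ih =>
      rw [Function.iterate_succ_apply']
      exact ih.trans (subset_forceStepR E forbid _)

lemma zfClosure_mono {S S' : Finset V} (h : S ⊆ S') : zfClosure E S ⊆ zfClosure E S' := by
  rw [zfClosure, zfClosure]
  generalize Fintype.card V = k
  induction k with
  | zero => simpa
  | succ k ih =>
      rw [Function.iterate_succ_apply', Function.iterate_succ_apply']
      exact forceStep_mono E ih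

lemma zfClosureR_mono {S S' : Finset V} (h : S ⊆ S') :
    zfClosureR E forbid S ⊆ zfClosureR E forbid S' := by
  rw [zfClosureR, zfClosureR]
  generalize Fintype.card V = k
  induction k with
  | zero => simpa
  | succ k ih =>
      rw [Function.iterate_succ_apply', Function.iterate_succ_apply']
      exact forceStepR_mono E forbid ih

end ZF

section Feas
variable {n : ℕ} (A : Fin n → Fin n → Prop)

lemma feasible_univ : Feasible A univ := by
  constructor
  · rw [WA, compl_eq_empty_iff]
    exact univ_subset_iff.mp (subset_zfClosure _ univ)
  · rw [Wx, compl_eq_empty_iff]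
    exact univ_subset_iff.mp (subset_zfClosureR _ _ univ)

lemma feasible_saturate (S : Finset (Fin n)) :
    Feasible A (S ∪ (WA A S ∪ Wx A S)) := by
  constructor
  · rw [WA, compl_eq_empty_iff]
    have h1 : zfClosure (fun u v => A v u) S ⊆ zfClosure (fun u v => A v u) (S ∪ (WA A S ∪ Wx A S)) :=
      zfClosure_mono _ subset_union_left
    have h2 : WA A S ⊆ zfClosure (fun u v => A v u) (S ∪ (WA A S ∪ Wx A S)) :=
      (subset_union_left.trans subset_union_right).trans (subset_zfClosure _ _)
    refine eq_univ_of_forall fun v => ?_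
    by_cases hv : v ∈ zfClosure (fun u v => A v u) S
    · exact h1 hv
    · exact h2 (by rwa [WA, mem_compl])
  · rw [Wx, compl_eq_empty_iff]
    have h1 : zfClosureR (fun u v => A v u ∨ u = v) (fun v => A v v) S ⊆ _ :=
      zfClosureR_mono (fun u v => A v u ∨ u = v) (fun v => A v v)
        (subset_union_left : S ⊆ S ∪ (WA A S ∪ Wx A S))
    have h2 : Wx A S ⊆ zfClosureR (fun u v => A v u ∨ u = v) (fun v => A v v) (S ∪ (WA A S ∪ Wx A S)) :=
      (subset_union_right.trans subset_union_right).trans (subset_zfClosureR _ _ _)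
    refine eq_univ_of_forall fun v => ?_
    by_cases hv : v ∈ zfClosureR (fun u v => A v u ∨ u = v) (fun v => A v v) S
    · exact h1 hv
    · exact h2 (by rwa [Wx, mem_compl])

lemma zcost_feasible {S : Finset (Fin n)} (h : Feasible A S) : zcost A ε S = S.card := by
  rw [zcost, h.1, h.2]
  simp

end Feas

section Star
variable {n : ℕ} (A : Fin n → Fin n → Prop) (ε : ℝ)

noncomputable def SStar : Finset (Finset (Fin n)) :=
  univ.filter (fun S : Finset (Fin n) =>
    Feasible A S ∧ ∀ S' : Finset (Fin n), Feasible A S' → S.card ≤ S'.card)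

lemma sstar_nonempty : (SStar A).Nonempty := by
  obtain ⟨S, hS, hmin⟩ := Finset.exists_min_image (univ.filter (fun S => Feasible A S))
    (fun S => S.card) ⟨univ, by simp [feasible_univ A]⟩
  refine ⟨S, ?_⟩
  simp only [SStar, mem_filter, mem_univ, true_and] at hS ⊢
  exact ⟨hS, fun S' hS' => hmin S' (by simp [hS'])⟩

lemma sstar_card_eq {S S' : Finset (Fin n)} (h : S ∈ SStar A) (h' : S' ∈ SStar A) :
    S.card = S'.card := by
  simp only [SStar, mem_filter, mem_univ, true_and] at h h'
  exact le_antisymm (h.2 S' h'.1) (h'.2 S h.1)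

lemma exists_cstar (hε : 0 < ε) :
    ∃ c : ℕ, (∀ S ∈ SStar A, zcost A ε S = (c : ℝ)) ∧
      (∀ S ∉ SStar A, (c : ℝ) < zcost A ε S) := by
  obtain ⟨S₀, hS₀⟩ := sstar_nonempty A
  refine ⟨S₀.card, fun S hS => ?_, fun S hS => ?_⟩
  · have hfeas : Feasible A S := by
      simp only [SStar, mem_filter, mem_univ, true_and] at hS; exact hS.1
    rw [zcost_feasible A hfeas, sstar_card_eq A hS hS₀]
  · have h0 := hS₀
    simp only [SStar, mem_filter, mem_univ, true_and] at h0
    by_cases hfeas : Feasible A S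
    · -- feasible but not minimal
      have : ¬ (∀ S', Feasible A S' → S.card ≤ S'.card) := by
        intro hmin
        exact hS (by simp only [SStar, mem_filter, mem_univ, true_and]; exact ⟨hfeas, hmin⟩)
      push_neg at this
      obtain ⟨S', hS', hlt⟩ := this
      have h1 : S₀.card ≤ S'.card := h0.2 S' hS'
      rw [zcost_feasible A hfeas]
      exact_mod_cast lt_of_le_of_lt h1 hlt
    · -- infeasible
      set w : ℕ := (WA A S ∪ Wx A S).card with hw
      have hw1 : 1 ≤ w := by
        rw [hw, Nat.one_le_iff_ne_zero, Ne, Finset.card_eq_zero]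
        intro hu
        rw [Finset.union_eq_empty] at hu
        exact hfeas ⟨hu.1, hu.2⟩
      have hcle : S₀.card ≤ S.card + w := by
        have h1 : S₀.card ≤ (S ∪ (WA A S ∪ Wx A S)).card :=
          h0.2 _ (feasible_saturate A S)
        exact h1.trans (Finset.card_union_le _ _)
      rw [zcost]
      have hwR : (1 : ℝ) ≤ (w : ℝ) := by exact_mod_cast hw1
      have : ((S₀.card : ℝ)) ≤ (S.card : ℝ) + (w : ℝ) := by exact_mod_cast hcle
      nlinarith [hwR, hε]

end Star


section MKL
variable {V : Type*} [Fintype V] [DecidableEq V]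
-- lemmas
lemma mem_N1 {S S' : Finset V} : S' ∈ N1 S ↔ ∃ x, x ∉ S ∧ S' = insert x S := by
  simp only [N1, mem_image, mem_compl]
  constructor
  · rintro ⟨x, hx, rfl⟩; exact ⟨x, hx, rfl⟩
  · rintro ⟨x, hx, rfl⟩; exact ⟨x, hx, rfl⟩

lemma mem_N2 {S S' : Finset V} : S' ∈ N2 S ↔ ∃ x, x ∈ S ∧ S' = S.erase x := by
  simp only [N2, mem_image]
  constructor
  · rintro ⟨x, hx, rfl⟩; exact ⟨x, hx, rfl⟩
  · rintro ⟨x, hx, rfl⟩; exact ⟨x, hx, rfl⟩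

lemma mem_N3 {S S' : Finset V} :
    S' ∈ N3 S ↔ ∃ a b, a ∉ S ∧ b ∈ S ∧ S' = (insert a S).erase b := by
  simp only [N3, mem_image, mem_product, mem_compl, Prod.exists]
  constructor
  · rintro ⟨a, b, ⟨ha, hb⟩, rfl⟩; exact ⟨a, b, ha, hb, rfl⟩
  · rintro ⟨a, b, ha, hb, rfl⟩; exact ⟨a, b, ⟨ha, hb⟩, rfl⟩

lemma card_of_mem_N1 {S S' : Finset V} (h : S' ∈ N1 S) : S'.card = S.card + 1 := by
  obtain ⟨x, hx, rfl⟩ := mem_N1.mp h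
  exact card_insert_of_notMem hx

lemma card_of_mem_N2 {S S' : Finset V} (h : S' ∈ N2 S) : S'.card + 1 = S.card := by
  obtain ⟨x, hx, rfl⟩ := mem_N2.mp h
  rw [card_erase_of_mem hx]
  exact Nat.succ_pred_eq_of_pos (card_pos.mpr ⟨x, hx⟩)

lemma card_of_mem_N3 {S S' : Finset V} (h : S' ∈ N3 S) : S'.card = S.card := by
  obtain ⟨a, b, ha, hb, rfl⟩ := mem_N3.mp h
  rw [card_erase_of_mem (mem_insert_of_mem hb), card_insert_of_notMem ha]
  omega

lemma self_not_mem_N1 (S : Finset V) : S ∉ N1 S := fun h => by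
  have := card_of_mem_N1 h; omega

lemma self_not_mem_N2 (S : Finset V) : S ∉ N2 S := fun h => by
  have := card_of_mem_N2 h; omega

lemma self_not_mem_N3 (S : Finset V) : S ∉ N3 S := fun h => by
  obtain ⟨a, b, ha, hb, hS⟩ := mem_N3.mp h
  have hab : a ≠ b := fun hab => ha (hab ▸ hb)
  have : a ∈ S := by
    rw [hS]
    exact mem_erase.mpr ⟨hab, mem_insert_self a S⟩
  exact ha this

lemma N1_symm {S S' : Finset V} : S' ∈ N1 S ↔ S ∈ N2 S' := by
  rw [mem_N1, mem_N2]
  constructor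
  · rintro ⟨x, hx, rfl⟩
    exact ⟨x, mem_insert_self x S, by rw [erase_insert hx]⟩
  · rintro ⟨x, hx, rfl⟩
    exact ⟨x, notMem_erase x S', by rw [insert_erase hx]⟩

lemma N3_symm {S S' : Finset V} : S' ∈ N3 S ↔ S ∈ N3 S' := by
  have key : ∀ S S' : Finset V, S' ∈ N3 S → S ∈ N3 S' := by
    intro S S' h
    obtain ⟨a, b, ha, hb, rfl⟩ := mem_N3.mp h
    have hab : a ≠ b := fun hab => ha (hab ▸ hb)
    rw [mem_N3]
    refine ⟨b, a, ?_, ?_, ?_⟩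
    · simp [hab.symm, hb]
    · exact mem_erase.mpr ⟨hab, mem_insert_self a S⟩
    · ext v
      simp only [mem_erase, mem_insert]
      by_cases hva : v = a <;> by_cases hvb : v = b <;>
        simp [hva, hvb, hab, hab.symm, ha, hb] <;> tauto
  exact ⟨key S S', key S' S⟩

lemma Poff_nonneg (C : Finset V → ℝ) (T : ℝ) (S S' : Finset V) : 0 ≤ Poff C T S S' := by
  have hmin : 0 ≤ min (Real.exp ((C S - C S') / T)) 1 :=
    le_min (Real.exp_pos _).le zero_le_one
  rw [Poff]
  split
  · positivity
  split
  · have h1 : (0:ℝ) ≤ S.card := Nat.cast_nonneg _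
    have h2 : (S.card : ℝ) ≤ (Fintype.card V : ℝ) := by
      exact_mod_cast card_le_univ S
    have : (0:ℝ) ≤ 1 / (3 * (S.card : ℝ) * ((Fintype.card V : ℝ) - (S.card : ℝ))) := by
      apply one_div_nonneg.mpr
      nlinarith
    exact mul_nonneg this hmin
  · exact le_refl 0

lemma min_exp_le_one (C : Finset V → ℝ) (T : ℝ) (S S' : Finset V) :
    min (Real.exp ((C S - C S') / T)) 1 ≤ 1 := min_le_right _ _

lemma Poff_sum_le_one (hV : 1 ≤ Fintype.card V) (C : Finset V → ℝ) (T : ℝ) (S : Finset V) :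
    ∑ S' ∈ univ.erase S, Poff C T S S' ≤ 1 := by
  set N : ℝ := (Fintype.card V : ℝ) with hN
  set c : ℝ := 1 / (3 * (S.card : ℝ) * (N - (S.card : ℝ))) with hc
  have hkN : (S.card : ℝ) ≤ N := by rw [hN]; exact_mod_cast card_le_univ S
  have hc0 : 0 ≤ c := by
    rw [hc]; apply one_div_nonneg.mpr
    have : (0:ℝ) ≤ (S.card : ℝ) := Nat.cast_nonneg _
    nlinarith
  have hb0 : (0:ℝ) ≤ 2 / (3 * N) := by positivity
  set b : Finset V → ℝ := fun S' =>
    (if S' ∈ N1 S ∪ N2 S then 2 / (3 * N) else 0) + (if S' ∈ N3 S then c else 0) with hbdef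
  have hle : ∀ S' ∈ univ.erase S, Poff C T S S' ≤ b S' := by
    intro S' _
    have hmin0 : 0 ≤ min (Real.exp ((C S - C S') / T)) 1 :=
      le_min (Real.exp_pos _).le zero_le_one
    have hmin1 := min_exp_le_one C T S S'
    rw [Poff, hbdef]
    split
    · rename_i h
      simp only [h, if_pos]
      have : 2 / (3 * N) * min (Real.exp ((C S - C S') / T)) 1 ≤ 2 / (3 * N) * 1 :=
        mul_le_mul_of_nonneg_left hmin1 hb0
      have h2 : (0:ℝ) ≤ if S' ∈ N3 S then c else 0 := by split <;> simp [hc0]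
      simp only [hN] at this ⊢
      linarith
    split
    · rename_i h1 h2
      simp only [h1, if_neg, h2, if_pos, not_false_iff, zero_add]
      calc (1 / (3 * (S.card : ℝ) * (N - (S.card : ℝ)))) * min (Real.exp ((C S - C S') / T)) 1
          ≤ c * 1 := by rw [hc]; exact mul_le_mul_of_nonneg_left hmin1 hc0
        _ = c := mul_one c
    · rename_i h1 h2
      simp only [h1, if_neg, h2, not_false_iff, zero_add, if_neg]
      simp
  calc ∑ S' ∈ univ.erase S, Poff C T S S' ≤ ∑ S' ∈ univ.erase S, b S' :=
        Finset.sum_le_sum hle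
    _ ≤ ∑ S' : Finset V, b S' := by
        refine Finset.sum_le_sum_of_subset_of_nonneg (erase_subset _ _) ?_
        intro S' _ _
        rw [hbdef]
        have h2 : (0:ℝ) ≤ if S' ∈ N3 S then c else 0 := by split <;> simp [hc0]
        have h1 : (0:ℝ) ≤ if S' ∈ N1 S ∪ N2 S then 2 / (3*N) else 0 := by
          split <;> simp [hb0]
        dsimp only
        linarith
    _ ≤ 1 := by
        rw [hbdef]
        rw [Finset.sum_add_distrib, Finset.sum_ite_mem, Finset.sum_ite_mem,
          Finset.univ_inter, Finset.univ_inter, Finset.sum_const, Finset.sum_const]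
        have hcard12 : ((N1 S ∪ N2 S).card : ℝ) ≤ N := by
          have h1 : (N1 S ∪ N2 S).card ≤ Sᶜ.card + S.card :=
            le_trans (card_union_le _ _) (by
              gcongr
              · exact card_image_le
              · exact card_image_le)
          have h2 : Sᶜ.card + S.card = Fintype.card V := by
            rw [card_compl]
            have := card_le_univ S
            omega
          rw [hN]
          exact_mod_cast h1.trans_eq h2
        have hcard3 : ((N3 S).card : ℝ) ≤ (Sᶜ.card : ℝ) * (S.card : ℝ) := by
          have h1 : (N3 S).card ≤ (Sᶜ ×ˢ S).card := card_image_le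
          rw [card_product] at h1
          exact_mod_cast h1
        have hterm1 : ((N1 S ∪ N2 S).card : ℝ) * (2 / (3 * N)) ≤ 2/3 := by
          have hN1 : (1:ℝ) ≤ N := by rw [hN]; exact_mod_cast hV
          calc ((N1 S ∪ N2 S).card : ℝ) * (2 / (3 * N)) ≤ N * (2 / (3*N)) :=
                mul_le_mul_of_nonneg_right hcard12 hb0
            _ = 2/3 := by field_simp
        have hterm3 : ((N3 S).card : ℝ) * c ≤ 1/3 := by
          rcases Nat.eq_zero_or_pos (Sᶜ.card * S.card) with h | h
          · have : (N3 S).card = 0 := by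
              have h1 : (N3 S).card ≤ (Sᶜ ×ˢ S).card := card_image_le
              rw [card_product] at h1
              omega
            rw [this]
            norm_num
          · have hk : 0 < S.card := by
              rcases Nat.eq_zero_or_pos S.card with h0 | h0
              · rw [h0, Nat.mul_zero] at h; omega
              · exact h0
            have hm : 0 < Sᶜ.card := by
              rcases Nat.eq_zero_or_pos Sᶜ.card with h0 | h0
              · rw [h0, Nat.zero_mul] at h; omega
              · exact h0
            have hmR : (Sᶜ.card : ℝ) = N - S.card := by
              rw [hN, card_compl, Nat.cast_sub (card_le_univ S)]
            calc ((N3 S).card : ℝ) * c ≤ ((Sᶜ.card : ℝ) * (S.card : ℝ)) * c :=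
                  mul_le_mul_of_nonneg_right hcard3 hc0
              _ = 1/3 := by
                  rw [hc, ← hmR]
                  have h1 : (0:ℝ) < (Sᶜ.card : ℝ) := by exact_mod_cast hm
                  have h2 : (0:ℝ) < (S.card : ℝ) := by exact_mod_cast hk
                  field_simp
        simp only [nsmul_eq_mul]
        linarith

lemma Ptrans_row_sum (C : Finset V → ℝ) (T : ℝ) (S : Finset V) :
    ∑ S', Ptrans C T S S' = 1 := by
  rw [← Finset.add_sum_erase univ (Ptrans C T S) (mem_univ S)]
  have h1 : Ptrans C T S S = 1 - ∑ S'' ∈ univ.erase S, Poff C T S S'' := by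
    rw [Ptrans, if_pos rfl]
  have h2 : ∑ S' ∈ univ.erase S, Ptrans C T S S' = ∑ S' ∈ univ.erase S, Poff C T S S' := by
    refine Finset.sum_congr rfl fun S' hS' => ?_
    rw [Ptrans, if_neg (Finset.ne_of_mem_erase hS')]
  rw [h1, h2]
  ring

lemma Ptrans_nonneg (hV : 1 ≤ Fintype.card V) (C : Finset V → ℝ) (T : ℝ) (S S' : Finset V) :
    0 ≤ Ptrans C T S S' := by
  rw [Ptrans]
  split
  · linarith [Poff_sum_le_one hV C T S]
  · exact Poff_nonneg C T S S'

lemma min_exp_pos (C : Finset V → ℝ) (T : ℝ) (S S' : Finset V) :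
    0 < min (Real.exp ((C S - C S') / T)) 1 := lt_min (Real.exp_pos _) one_pos

lemma Ptrans_insert_pos (hV : 1 ≤ Fintype.card V) (C : Finset V → ℝ) (T : ℝ)
    {S : Finset V} {x : V} (hx : x ∉ S) : 0 < Ptrans C T S (insert x S) := by
  have hne : insert x S ≠ S := by
    intro h
    exact hx (h ▸ mem_insert_self x S)
  rw [Ptrans, if_neg hne, Poff,
    if_pos (mem_union_left _ (mem_N1.mpr ⟨x, hx, rfl⟩))]
  have hN : (0:ℝ) < (Fintype.card V : ℝ) := by exact_mod_cast hV
  exact mul_pos (by positivity) (min_exp_pos C T _ _)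

lemma Ptrans_erase_pos (hV : 1 ≤ Fintype.card V) (C : Finset V → ℝ) (T : ℝ)
    {S : Finset V} {x : V} (hx : x ∈ S) : 0 < Ptrans C T S (S.erase x) := by
  have hne : S.erase x ≠ S := by
    intro h
    exact (h ▸ notMem_erase x S) hx
  rw [Ptrans, if_neg hne, Poff,
    if_pos (mem_union_right _ (mem_N2.mpr ⟨x, hx, rfl⟩))]
  have hN : (0:ℝ) < (Fintype.card V : ℝ) := by exact_mod_cast hV
  exact mul_pos (by positivity) (min_exp_pos C T _ _)

lemma Ptrans_empty_pos (hV : 1 ≤ Fintype.card V) (C : Finset V → ℝ) (T : ℝ) :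
    0 < Ptrans C T (∅ : Finset V) ∅ := by
  rw [Ptrans, if_pos rfl]
  set N : ℝ := (Fintype.card V : ℝ) with hN
  have hN1 : (1:ℝ) ≤ N := by rw [hN]; exact_mod_cast hV
  have hb0 : (0:ℝ) ≤ 2 / (3 * N) := by positivity
  have hsum : ∑ S' ∈ univ.erase (∅ : Finset V), Poff C T ∅ S' ≤ 2/3 := by
    have hle : ∀ S' ∈ univ.erase (∅ : Finset V), Poff C T ∅ S' ≤
        if S' ∈ N1 (∅ : Finset V) ∪ N2 ∅ then 2 / (3 * N) else 0 := by
      intro S' _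
      have hmin1 := min_exp_le_one C T (∅ : Finset V) S'
      have hmin0 : 0 ≤ min (Real.exp ((C ∅ - C S') / T)) 1 :=
        le_min (Real.exp_pos _).le zero_le_one
      rw [Poff]
      split
      · rename_i h
        calc 2 / (3 * (Fintype.card V:ℝ)) * min (Real.exp ((C ∅ - C S') / T)) 1
            ≤ 2 / (3 * N) * 1 := by
              rw [hN]; exact mul_le_mul_of_nonneg_left hmin1 hb0
          _ = 2 / (3 * N) := mul_one _
      split
      · rename_i h1 h2
        exfalso
        obtain ⟨a, b, _, hb, _⟩ := mem_N3.mp h2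
        exact notMem_empty b hb
      · exact le_refl 0
    calc ∑ S' ∈ univ.erase (∅ : Finset V), Poff C T ∅ S'
        ≤ ∑ S' ∈ univ.erase (∅ : Finset V), (if S' ∈ N1 (∅ : Finset V) ∪ N2 ∅ then 2 / (3 * N) else 0) :=
          Finset.sum_le_sum hle
      _ ≤ ∑ S' : Finset V, (if S' ∈ N1 (∅ : Finset V) ∪ N2 ∅ then 2 / (3 * N) else 0) := by
          refine Finset.sum_le_sum_of_subset_of_nonneg (erase_subset _ _) fun S' _ _ => ?_
          split <;> simp [hb0]
      _ ≤ 2/3 := by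
          rw [Finset.sum_ite_mem, Finset.univ_inter, Finset.sum_const, nsmul_eq_mul]
          have hcard : ((N1 (∅ : Finset V) ∪ N2 ∅).card : ℝ) ≤ N := by
            have h1 : (N1 (∅ : Finset V) ∪ N2 ∅).card ≤ (∅ : Finset V)ᶜ.card + (∅ : Finset V).card :=
              le_trans (card_union_le _ _) (by gcongr <;> exact card_image_le)
            have h2 : (∅ : Finset V)ᶜ.card + (∅ : Finset V).card = Fintype.card V := by
              simp
            rw [hN]
            exact_mod_cast h1.trans_eq h2
          calc ((N1 (∅ : Finset V) ∪ N2 ∅).card : ℝ) * (2 / (3 * N)) ≤ N * (2 / (3*N)) :=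
                mul_le_mul_of_nonneg_right hcard hb0
            _ = 2/3 := by field_simp
  linarith

lemma exp_min_symm (C : Finset V → ℝ) (T : ℝ) (S S' : Finset V) :
    Real.exp (-C S / T) * min (Real.exp ((C S - C S') / T)) 1 =
    Real.exp (-C S' / T) * min (Real.exp ((C S' - C S) / T)) 1 := by
  have key : ∀ X Y : Finset V, Real.exp (-C X / T) * min (Real.exp ((C X - C Y) / T)) 1 =
      min (Real.exp (-C Y / T)) (Real.exp (-C X / T)) := by
    intro X Y
    rw [mul_min_of_nonneg _ _ (Real.exp_pos _).le, mul_one, ← Real.exp_add]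
    congr 2
    rw [← add_div]
    ring_nf
  rw [key, key, min_comm]

lemma detailed_balance (C : Finset V → ℝ) (T : ℝ) (S S' : Finset V) :
    Real.exp (-C S / T) * Ptrans C T S S' = Real.exp (-C S' / T) * Ptrans C T S' S := by
  by_cases h : S' = S
  · rw [h]
  · rw [Ptrans, if_neg h, Ptrans, if_neg (Ne.symm h)]
    by_cases h12 : S' ∈ N1 S ∪ N2 S
    · have h12' : S ∈ N1 S' ∪ N2 S' := by
        rcases mem_union.mp h12 with h1 | h2
        · exact mem_union_right _ (N1_symm.mp h1)
        · exact mem_union_left _ (N1_symm.mpr h2)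
      rw [Poff, if_pos h12, Poff, if_pos h12']
      linear_combination (2 / (3 * (Fintype.card V : ℝ))) * exp_min_symm C T S S'
    · by_cases h3 : S' ∈ N3 S
      · have h3' : S ∈ N3 S' := N3_symm.mp h3
        have h12' : S ∉ N1 S' ∪ N2 S' := by
          intro hmem
          rcases mem_union.mp hmem with h1 | h2
          · exact h12 (mem_union_right _ (N1_symm.mp h1))
          · exact h12 (mem_union_left _ (N1_symm.mpr h2))
        rw [Poff, if_neg h12, if_pos h3, Poff, if_neg h12', if_pos h3']
        have hcard : S'.card = S.card := card_of_mem_N3 h3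
        rw [hcard]
        linear_combination (1 / (3 * (S.card : ℝ) * ((Fintype.card V : ℝ) - (S.card : ℝ)))) *
          exp_min_symm C T S S'
      · have h3' : S ∉ N3 S' := fun hmem => h3 (N3_symm.mpr hmem)
        have h12' : S ∉ N1 S' ∪ N2 S' := by
          intro hmem
          rcases mem_union.mp hmem with h1 | h2
          · exact h12 (mem_union_right _ (N1_symm.mp h1))
          · exact h12 (mem_union_left _ (N1_symm.mpr h2))
        rw [Poff, if_neg h12, if_neg h3, Poff, if_neg h12', if_neg h3']
        ring

lemma gibbs_Z_pos (C : Finset V → ℝ) (T : ℝ) :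
    0 < ∑ S₁ : Finset V, Real.exp (-C S₁ / T) :=
  Finset.sum_pos (fun S _ => Real.exp_pos _) univ_nonempty

lemma gibbs_sum_one (C : Finset V → ℝ) (T : ℝ) : ∑ S : Finset V, gibbs C T S = 1 := by
  simp only [gibbs]
  rw [← Finset.sum_div]
  exact div_self (gibbs_Z_pos C T).ne'

lemma gibbs_stationary (C : Finset V → ℝ) (T : ℝ) (S' : Finset V) :
    ∑ S : Finset V, gibbs C T S * Ptrans C T S S' = gibbs C T S' := by
  have key : ∀ S, gibbs C T S * Ptrans C T S S' = gibbs C T S' * Ptrans C T S' S := by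
    intro S
    rw [gibbs, gibbs, div_mul_eq_mul_div, div_mul_eq_mul_div, detailed_balance C T S S']
  calc ∑ S : Finset V, gibbs C T S * Ptrans C T S S'
      = ∑ S : Finset V, gibbs C T S' * Ptrans C T S' S := Finset.sum_congr rfl fun S _ => key S
    _ = gibbs C T S' * ∑ S : Finset V, Ptrans C T S' S := by rw [Finset.mul_sum]
    _ = gibbs C T S' := by rw [Ptrans_row_sum C T S']; ring


lemma Ptrans_pow_pos (hV : 1 ≤ Fintype.card V) (C : Finset V → ℝ) (T : ℝ) :
    ∀ S S' : Finset V,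
      0 < (((Matrix.of fun S₁ S₂ => Ptrans C T S₁ S₂) :
        Matrix (Finset V) (Finset V) ℝ) ^ (2 * Fintype.card V)) S S' := by
  set P : Matrix (Finset V) (Finset V) ℝ := Matrix.of fun S₁ S₂ => Ptrans C T S₁ S₂ with hP
  have hnn : ∀ x y, 0 ≤ P x y := fun x y => Ptrans_nonneg hV C T x y
  have step1 : ∀ (t : ℕ) (a b c : Finset V), 0 < P a b → 0 < (P ^ t) b c →
      0 < (P ^ (t + 1)) a c := by
    intro t a b c h1 h2
    have hle : (P ^ 1) a b * (P ^ t) b c ≤ (P ^ (1 + t)) a c :=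
      pow_entry_le_of_step P hnn
    rw [pow_one] at hle
    rw [add_comm]
    exact lt_of_lt_of_le (mul_pos h1 h2) hle
  have step2 : ∀ (t : ℕ) (a b c : Finset V), 0 < (P ^ t) a b → 0 < P b c →
      0 < (P ^ (t + 1)) a c := by
    intro t a b c h1 h2
    have hle : (P ^ t) a b * (P ^ 1) b c ≤ (P ^ (t + 1)) a c :=
      pow_entry_le_of_step P hnn
    rw [pow_one] at hle
    exact lt_of_lt_of_le (mul_pos h1 h2) hle
  have claim1 : ∀ (k : ℕ) (S : Finset V), S.card = k → 0 < (P ^ k) S ∅ := by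
    intro k
    induction k with
    | zero =>
        intro S hS
        rw [Finset.card_eq_zero] at hS
        subst hS
        simp [Matrix.one_apply_eq]
    | succ k ih =>
        intro S hS
        have hne : S.Nonempty := Finset.card_pos.mp (by omega)
        obtain ⟨x, hx⟩ := hne
        have h1 : 0 < P S (S.erase x) := Ptrans_erase_pos hV C T hx
        have h2 : (S.erase x).card = k := by
          rw [Finset.card_erase_of_mem hx]; omega
        exact step1 k S (S.erase x) ∅ h1 (ih _ h2)
  have claim2 : ∀ (k : ℕ) (S : Finset V), S.card ≤ k → 0 < (P ^ k) ∅ S := by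
    intro k
    induction k with
    | zero =>
        intro S hS
        have : S = ∅ := Finset.card_eq_zero.mp (by omega)
        subst this
        simp [Matrix.one_apply_eq]
    | succ k ih =>
        intro S hS
        rcases Finset.eq_empty_or_nonempty S with rfl | ⟨x, hx⟩
        · exact step2 k ∅ ∅ ∅ (ih ∅ (by simp)) (Ptrans_empty_pos hV C T)
        · have h2 : (S.erase x).card ≤ k := by
            rw [Finset.card_erase_of_mem hx]; omega
          have h1 : 0 < P (S.erase x) S := by
            have h0 : 0 < P (S.erase x) (insert x (S.erase x)) :=
              Ptrans_insert_pos hV C T (Finset.notMem_erase x S)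
            rwa [Finset.insert_erase hx] at h0
          exact step2 k ∅ (S.erase x) S (ih _ h2) h1
  intro S S'
  have hSle : S.card ≤ Fintype.card V := Finset.card_le_univ S
  have hS'le : S'.card ≤ Fintype.card V := Finset.card_le_univ S'
  set m : ℕ := 2 * Fintype.card V - S.card with hm
  have hsplit : S.card + m = 2 * Fintype.card V := by omega
  have h1 : 0 < (P ^ S.card) S ∅ := claim1 _ S rfl
  have h2 : 0 < (P ^ m) ∅ S' := claim2 m S' (by omega)
  have hle : (P ^ S.card) S ∅ * (P ^ m) ∅ S' ≤ (P ^ (S.card + m)) S S' :=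
    pow_entry_le_of_step P hnn
  rw [hsplit] at hle
  exact lt_of_lt_of_le (mul_pos h1 h2) hle

end MKL

section GibbsLimit
open Set

lemma gibbs_sstar_tendsto {n : ℕ} (A : Fin n → Fin n → Prop) (ε : ℝ) (hε : 0 < ε) :
    Filter.Tendsto (fun T => ∑ S ∈ SStar A, gibbs (zcost A ε) T S)
      (nhdsWithin 0 (Set.Ioi 0)) (nhds 1) := by
  obtain ⟨c, hceq, hclt⟩ := exists_cstar A ε hε
  set Nstar : ℝ := ((SStar A).card : ℝ) with hNstar
  have hNpos : 0 < Nstar := by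
    rw [hNstar]
    exact_mod_cast Finset.card_pos.mpr (sstar_nonempty A)
  set R : ℝ → ℝ := fun T => ∑ S ∈ (SStar A)ᶜ, Real.exp (-(zcost A ε S - c) / T) with hR
  have hRlim : Filter.Tendsto R (nhdsWithin 0 (Set.Ioi 0)) (nhds 0) := by
    rw [hR]
    have htsum : Filter.Tendsto (fun T => ∑ S ∈ (SStar A)ᶜ, Real.exp (-(zcost A ε S - c) / T))
        (nhdsWithin 0 (Set.Ioi 0)) (nhds (∑ S ∈ (SStar A)ᶜ, (0:ℝ))) := by
      refine tendsto_finset_sum _ fun S hS => ?_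
      have hd : 0 < zcost A ε S - c := by
        have := hclt S (Finset.mem_compl.mp hS)
        linarith
      have h2 : Filter.Tendsto (fun T : ℝ => T⁻¹) (nhdsWithin 0 (Set.Ioi 0)) Filter.atTop :=
        tendsto_inv_nhdsGT_zero
      have h3 : Filter.Tendsto (fun T : ℝ => -(zcost A ε S - c) * T⁻¹)
          (nhdsWithin 0 (Set.Ioi 0)) Filter.atBot :=
        (tendsto_const_mul_atBot_of_neg (by linarith)).mpr h2
      have h1 : Filter.Tendsto (fun T : ℝ => -(zcost A ε S - c) / T)
          (nhdsWithin 0 (Set.Ioi 0)) Filter.atBot := by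
        refine h3.congr fun T => ?_
        rw [div_eq_mul_inv]
      exact Real.tendsto_exp_atBot.comp h1
    simpa using htsum
  have heq : ∀ T ∈ Set.Ioi (0:ℝ),
      ∑ S ∈ SStar A, gibbs (zcost A ε) T S = Nstar / (Nstar + R T) := by
    intro T hT
    have hT0 : (T:ℝ) ≠ 0 := ne_of_gt hT
    set e : ℝ := Real.exp (-(c:ℝ) / T) with he
    have he0 : e ≠ 0 := (Real.exp_pos _).ne'
    set Z : ℝ := ∑ S₁ : Finset (Fin n), Real.exp (-(zcost A ε S₁) / T) with hZ
    have hnum : ∑ S ∈ SStar A, Real.exp (-(zcost A ε S) / T) = Nstar * e := by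
      rw [Finset.sum_congr rfl fun S hS => by rw [hceq S hS]]
      rw [Finset.sum_const, nsmul_eq_mul, hNstar, he]
    have hcompl : ∀ S ∈ (SStar A)ᶜ,
        Real.exp (-(zcost A ε S) / T) = Real.exp (-(zcost A ε S - c) / T) * e := by
      intro S _
      rw [he, ← Real.exp_add]
      congr 1
      field_simp
      ring
    have hZeq : Z = (Nstar + R T) * e := by
      rw [hZ, ← Finset.sum_add_sum_compl (SStar A) (fun S => Real.exp (-(zcost A ε S) / T)),
        hnum, Finset.sum_congr rfl hcompl, ← Finset.sum_mul]
      simp only [hR]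
      ring
    have : ∑ S ∈ SStar A, gibbs (zcost A ε) T S
        = (∑ S ∈ SStar A, Real.exp (-(zcost A ε S) / T)) / Z := by
      rw [hZ]
      simp only [gibbs]
      rw [Finset.sum_div]
    rw [this, hnum, hZeq, mul_div_mul_right _ _ he0]
  have hfin : Filter.Tendsto (fun T => Nstar / (Nstar + R T))
      (nhdsWithin 0 (Set.Ioi 0)) (nhds 1) := by
    have h1 : Filter.Tendsto (fun T => Nstar + R T) (nhdsWithin 0 (Set.Ioi 0))
        (nhds Nstar) := by
      have := (tendsto_const_nhds (x := Nstar)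
        (f := nhdsWithin (0:ℝ) (Set.Ioi 0))).add hRlim
      simpa using this
    have h2 := (tendsto_const_nhds (x := Nstar)
      (f := nhdsWithin (0:ℝ) (Set.Ioi 0))).div h1 hNpos.ne'
    rw [div_self hNpos.ne'] at h2
    exact h2
  refine hfin.congr' ?_
  filter_upwards [self_mem_nhdsWithin] with T hT
  exact (heq T hT).symm

end GibbsLimit
end MyAux

/-- for every initial state `S₀`,
`lim_{T→0⁺} lim_{t→∞} Σ_{S ∈ 𝒮*} (P_T^t)(S₀, S) = 1`, where `𝒮*` is the
collection of feasible sets of minimum cardinality: for large time and small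
temperature the MCMC chain is, with probability approaching 1, at a
minimum-cardinality feasible set. -/
theorem mcmc_converges_to_optimal {n : ℕ} (hn : 1 ≤ n) (A : Fin n → Fin n → Prop)
    (ε : ℝ) (hε : 0 < ε) (S₀ : Finset (Fin n)) :
    ∃ L : ℝ → ℝ,
      (∀ T : ℝ, 0 < T →
        Filter.Tendsto
          (fun t : ℕ =>
            ∑ S ∈ univ.filter (fun S : Finset (Fin n) =>
                Feasible A S ∧ ∀ S' : Finset (Fin n), Feasible A S' → S.card ≤ S'.card),
              (((Matrix.of fun S₁ S₂ => Ptrans (zcost A ε) T S₁ S₂) :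
                Matrix (Finset (Fin n)) (Finset (Fin n)) ℝ) ^ t) S₀ S)
          Filter.atTop (nhds (L T))) ∧
      Filter.Tendsto L (nhdsWithin 0 (Set.Ioi 0)) (nhds 1) := by
  classical
  refine ⟨fun T => ∑ S ∈ SStar A, gibbs (zcost A ε) T S, ?_, gibbs_sstar_tendsto A ε hε⟩
  intro T hT
  set C : Finset (Fin n) → ℝ := zcost A ε with hC
  set P : Matrix (Finset (Fin n)) (Finset (Fin n)) ℝ :=
    Matrix.of (fun S₁ S₂ => Ptrans C T S₁ S₂) with hP
  have hV : 1 ≤ Fintype.card (Fin n) := by simpa using hn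
  have hnn : ∀ x y, 0 ≤ P x y := fun x y => Ptrans_nonneg hV C T x y
  have hrow : ∀ x, ∑ y, P x y = 1 := fun x => Ptrans_row_sum C T x
  set s : ℕ := 2 * Fintype.card (Fin n) with hs
  have hs0 : 0 < s := by
    rw [hs]
    have : Fintype.card (Fin n) = n := Fintype.card_fin n
    omega
  have hpos := Ptrans_pow_pos hV C T
  have hne : ((univ ×ˢ univ : Finset (Finset (Fin n) × Finset (Fin n)))).Nonempty :=
    univ_nonempty
  set δ : ℝ := (univ ×ˢ univ).inf' hne (fun p => (P ^ s) p.1 p.2) with hδdef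
  have hδ : 0 < δ := (Finset.lt_inf'_iff hne).mpr fun p _ => hpos p.1 p.2
  have hQ : ∀ x y, δ ≤ (P ^ s) x y := fun x y =>
    Finset.inf'_le _ (by simp : (x, y) ∈ univ ×ˢ univ)
  set f : Finset (Fin n) → ℝ := fun S => if S ∈ SStar A then (1:ℝ) else 0 with hf
  have key := chain_tendsto P hnn hrow s hs0 δ hδ hQ (gibbs C T) (gibbs_sum_one C T)
    (fun y => gibbs_stationary C T y) f S₀
  have h2 : ∑ x, gibbs C T x * f x = ∑ S ∈ SStar A, gibbs (zcost A ε) T S := by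
    rw [hf, hC]
    simp only [mul_ite, mul_one, mul_zero]
    rw [Finset.sum_ite_mem, Finset.univ_inter]
  rw [h2] at key
  have h1 : ∀ t : ℕ, ((P ^ t).mulVec f) S₀ =
      ∑ S ∈ univ.filter (fun S : Finset (Fin n) =>
        Feasible A S ∧ ∀ S' : Finset (Fin n), Feasible A S' → S.card ≤ S'.card),
        (P ^ t) S₀ S := by
    intro t
    have : ((P ^ t).mulVec f) S₀ = ∑ S, (P ^ t) S₀ S * f S := rfl
    rw [this, hf]
    simp only [mul_ite, mul_one, mul_zero]
    rw [Finset.sum_ite_mem, Finset.univ_inter]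
    rfl
  refine key.congr fun t => ?_
  rw [h1 t]
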